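/- Let α, β, γ ∈ ℤ[i] be a primitive Pythagorean triple in ℤ[i] (α² + β² = γ² and every common divisor of α, β, γ is a unit), with α even in ℤ[i] and β, γ odd in ℤ[i]. Then there exist κ, τ ∈ ℤ[i] of different parity, with every common divisor of κ and τ a unit, and units ε₁, ε₂, ε₃ of ℤ[i], such that α = 2ε₁κτ and either β = ε₂(κ² − τ²) and γ = ε₃(κ² + τ²), or β = ε₂(κ² + τ²) and γ = ε₃(κ² − τ²). -/

import Mathlib

/-- A Gaussian integer `n + im` is even in `ℤ[i]` if `n` and `m` have
the same parity in `ℤ` (and odd otherwise). -/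
def GaussianEven (α : GaussianInt) : Prop := α.re % 2 = α.im % 2

lemma evenIff (x : GaussianInt) : GaussianEven x ↔ (2:ℤ) ∣ (x.re + x.im) := by
  unfold GaussianEven; omega

lemma even_mul' (x y : GaussianInt) :
    GaussianEven (x*y) ↔ (GaussianEven x ∨ GaussianEven y) := by
  have zmod2cast : ∀ n : ℤ, (2:ℤ) ∣ n ↔ ((n : ZMod 2) = 0) := fun n => by
    exact_mod_cast (ZMod.intCast_zmod_eq_zero_iff_dvd n 2).symm
  rw [evenIff, evenIff, evenIff, zmod2cast, zmod2cast, zmod2cast]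
  have hre : (x*y).re = x.re*y.re - x.im*y.im := by rw [Zsqrtd.re_mul]; ring
  have him : (x*y).im = x.re*y.im + x.im*y.re := Zsqrtd.im_mul ..
  rw [hre, him]
  push_cast
  have key : ∀ a b c d : ZMod 2, (a*c - b*d) + (a*d + b*c) = 0 ↔ (a+b=0 ∨ c+d=0) := by decide
  exact key _ _ _ _

lemma unit_not_even (z : GaussianIntˣ) : ¬ GaussianEven (z : GaussianInt) := by
  intro h
  have h1 : GaussianEven ((z : GaussianInt) * ↑z⁻¹) := (even_mul' _ _).mpr (Or.inl h)
  rw [z.mul_inv] at h1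
  have : ¬ GaussianEven 1 := by
    rw [evenIff]
    simp
  exact this h1

set_option maxHeartbeats 1000000 in
lemma zkey : ∀ (a b c d e f : ZMod 4),
      (a * a - b * b + (c * c - d * d) = e * e - f * f ∧
        a * b + c * d = e * f ∧
          (a + b = 0 ∨ a + b = 2) ∧
            ¬(c + d = 0 ∨ c + d = 2) ∧
              ¬(e + f = 0 ∨ e + f = 2)) →
                ((a = 0 ∨ a = 2) ∧ (b = 0 ∨ b = 2) ∧ (e + c = 0 ∨ e + c = 2) ∧ (f + d = 0 ∨ f + d = 2)) := by
  decide

lemma keyPar (A B C D E F : ℤ)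
    (h1 : A*A - B*B + (C*C - D*D) = E*E - F*F)
    (h2 : A*B + C*D = E*F)
    (hA : (2:ℤ) ∣ (A + B)) (hC : ¬ (2:ℤ) ∣ (C + D)) (hE : ¬ (2:ℤ) ∣ (E + F)) :
    (2:ℤ) ∣ A ∧ (2:ℤ) ∣ B ∧ (2:ℤ) ∣ (E + C) ∧ (2:ℤ) ∣ (F + D) := by
  have dvd4 : ∀ n : ℤ, (2:ℤ) ∣ n ↔ ((n : ZMod 4) = 0 ∨ (n : ZMod 4) = 2) := by
    intro n
    constructor
    · rintro ⟨k, rfl⟩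
      have h : ∀ x : ZMod 4, 2*x = 0 ∨ 2*x = 2 := by decide
      push_cast
      exact h _
    · intro h
      have h4 : (4:ℤ) ∣ n ∨ (4:ℤ) ∣ n - 2 := by
        rcases h with h | h
        · left; exact_mod_cast (ZMod.intCast_zmod_eq_zero_iff_dvd n 4).mp h
        · right
          apply (ZMod.intCast_zmod_eq_zero_iff_dvd _ 4).mp
          push_cast
          rw [h]; ring
      omega
  rw [dvd4] at hA hC hE
  rw [dvd4, dvd4, dvd4, dvd4]
  have c1 : (A:ZMod 4)*A - B*B + (C*C - D*D) = E*E - F*F := by exact_mod_cast congrArg (fun n : ℤ => (n : ZMod 4)) h1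
  have c2 : (A:ZMod 4)*B + C*D = E*F := by exact_mod_cast congrArg (fun n : ℤ => (n : ZMod 4)) h2
  push_cast at hA hC hE ⊢
  exact zkey _ _ _ _ _ _ ⟨c1, c2, hA, hC, hE⟩

lemma unit_vals (z : GaussianIntˣ) :
    (z : GaussianInt) = 1 ∨ (z : GaussianInt) = -1 ∨
    (z : GaussianInt) = ⟨0,1⟩ ∨ (z : GaussianInt) = ⟨0,-1⟩ := by
  have h1 : (z : GaussianInt) * ↑z⁻¹ = 1 := z.mul_inv
  have hn : (z : GaussianInt).norm * ((z⁻¹ : GaussianIntˣ) : GaussianInt).norm = 1 := by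
    rw [← Zsqrtd.norm_mul, h1, Zsqrtd.norm_one]
  have hnn : 0 ≤ (z : GaussianInt).norm := Zsqrtd.norm_nonneg (by norm_num) _
  have hone : (z : GaussianInt).norm = 1 := by
    rcases Int.isUnit_iff.mp (IsUnit.of_mul_eq_one _ hn) with h | h
    · exact h
    · omega
  have hx : (z : GaussianInt).re * (z : GaussianInt).re +
      (z : GaussianInt).im * (z : GaussianInt).im = 1 := by
    have := hone
    unfold Zsqrtd.norm at this
    linarith [this]
  set x := (z : GaussianInt).re with hxdef
  set y := (z : GaussianInt).im with hydef
  have hxb : -1 ≤ x ∧ x ≤ 1 := by constructor <;> nlinarith [mul_self_nonneg x, mul_self_nonneg y]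
  have hyb : -1 ≤ y ∧ y ≤ 1 := by constructor <;> nlinarith [mul_self_nonneg x, mul_self_nonneg y]
  have hcases : (x = 1 ∧ y = 0) ∨ (x = -1 ∧ y = 0) ∨ (x = 0 ∧ y = 1) ∨ (x = 0 ∧ y = -1) := by
    obtain ⟨h1x, h2x⟩ := hxb
    obtain ⟨h1y, h2y⟩ := hyb
    interval_cases x <;> interval_cases y <;> omega
  rcases hcases with ⟨h1, h2⟩ | ⟨h1, h2⟩ | ⟨h1, h2⟩ | ⟨h1, h2⟩
  · left; apply Zsqrtd.ext <;> simp <;> omega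
  · right; left; apply Zsqrtd.ext <;> simp <;> omega
  · right; right; left; apply Zsqrtd.ext <;> simp <;> omega
  · right; right; right; apply Zsqrtd.ext <;> simp <;> omega

lemma unit_sq (z : GaussianIntˣ) :
    (z : GaussianInt)^2 = 1 ∨ (z : GaussianInt)^2 = -1 := by
  rcases unit_vals z with h | h | h | h <;> rw [h]
  · left; ring
  · left; ring
  · right
    rw [pow_two]
    apply Zsqrtd.ext <;> simp [Zsqrtd.re_mul, Zsqrtd.im_mul]
  · right
    rw [pow_two]
    apply Zsqrtd.ext <;> simp [Zsqrtd.re_mul, Zsqrtd.im_mul]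

/-- parametrization of primitive Pythagorean triples in
`ℤ[i]`.  If `α² + β² = γ²`, every common divisor of `α, β, γ` is a unit,
`α` is even and `β, γ` are odd, then `α = 2ε₁κτ` and
`{β, γ} = {ε₂(κ² − τ²), ε₃(κ² + τ²)}` for some coprime `κ, τ ∈ ℤ[i]` of
different parity and units `ε₁, ε₂, ε₃`. -/
theorem primitive_pythagorean_triple_param (α β γ : GaussianInt)
    (hpyth : α ^ 2 + β ^ 2 = γ ^ 2)
    (hprim : ∀ δ : GaussianInt, δ ∣ α → δ ∣ β → δ ∣ γ → IsUnit δ)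
    (hα : GaussianEven α) (hβ : ¬ GaussianEven β) (hγ : ¬ GaussianEven γ) :
    ∃ κ τ : GaussianInt,
      ((GaussianEven κ ∧ ¬ GaussianEven τ) ∨ (¬ GaussianEven κ ∧ GaussianEven τ)) ∧
      (∀ δ : GaussianInt, δ ∣ κ → δ ∣ τ → IsUnit δ) ∧
      ∃ ε₁ ε₂ ε₃ : GaussianIntˣ,
        α = 2 * (ε₁ : GaussianInt) * κ * τ ∧
        ((β = (ε₂ : GaussianInt) * (κ ^ 2 - τ ^ 2) ∧
          γ = (ε₃ : GaussianInt) * (κ ^ 2 + τ ^ 2)) ∨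
         (β = (ε₂ : GaussianInt) * (κ ^ 2 + τ ^ 2) ∧
          γ = (ε₃ : GaussianInt) * (κ ^ 2 - τ ^ 2))) := by
  -- component equations
  have hre : α.re*α.re - α.im*α.im + (β.re*β.re - β.im*β.im) = γ.re*γ.re - γ.im*γ.im := by
    have h := congrArg Zsqrtd.re hpyth
    simp only [pow_two, Zsqrtd.re_add, Zsqrtd.re_mul] at h
    linarith [h]
  have him : α.re*α.im + β.re*β.im = γ.re*γ.im := by
    have h := congrArg Zsqrtd.im hpyth
    simp only [pow_two, Zsqrtd.im_add, Zsqrtd.im_mul] at h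
    linarith [h]
  rw [evenIff] at hα hβ hγ
  obtain ⟨h2A, h2B, h2EC, h2FD⟩ := keyPar α.re α.im β.re β.im γ.re γ.im hre him hα hβ hγ
  -- 2 ∣ α, 2 ∣ γ+β, 2 ∣ γ-β
  have hdvdα : (2 : GaussianInt) ∣ α := by
    have : ((2:ℤ) : GaussianInt) ∣ α := (Zsqrtd.intCast_dvd 2 α).mpr ⟨h2A, h2B⟩
    exact_mod_cast this
  have hdvdu : (2 : GaussianInt) ∣ (γ + β) := by
    have : ((2:ℤ) : GaussianInt) ∣ (γ + β) := by
      rw [Zsqrtd.intCast_dvd]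
      constructor
      · rw [Zsqrtd.re_add]; exact h2EC
      · rw [Zsqrtd.im_add]; exact h2FD
    exact_mod_cast this
  have hdvdv : (2 : GaussianInt) ∣ (γ - β) := by
    have : ((2:ℤ) : GaussianInt) ∣ (γ - β) := by
      rw [Zsqrtd.intCast_dvd]
      constructor
      · rw [Zsqrtd.re_sub]; omega
      · rw [Zsqrtd.im_sub]; omega
    exact_mod_cast this
  obtain ⟨a, ha⟩ := hdvdα
  obtain ⟨u, hu⟩ := hdvdu
  obtain ⟨v, hv⟩ := hdvdv
  have h2ne : (2 : GaussianInt) ≠ 0 := by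
    intro h
    have := congrArg Zsqrtd.re h
    simp at this
  have h4ne : (4 : GaussianInt) ≠ 0 := by
    intro h
    have := congrArg Zsqrtd.re h
    simp at this
  have hβuv : β = u - v := by
    apply mul_left_cancel₀ h2ne
    linear_combination hu - hv
  have hγuv : γ = u + v := by
    apply mul_left_cancel₀ h2ne
    linear_combination hu + hv
  have huv : u * v = a ^ 2 := by
    apply mul_left_cancel₀ h4ne
    linear_combination (-(γ - β))*hu - (2*u)*hv - hpyth + (α + 2*a)*ha
  -- β ≠ 0
  have hβ0 : β ≠ 0 := by
    intro h
    apply hβ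
    rw [h]
    simp
  -- coprimality of u v
  have hcop : IsCoprime u v := by
    apply EuclideanDomain.isCoprime_of_dvd
    · rintro ⟨rfl, rfl⟩
      exact hβ0 (by rw [hβuv]; ring)
    · intro z hz hz0 hzu hzv
      obtain ⟨p, hpirr, hpz⟩ := WfDvdMonoid.exists_irreducible_factor hz hz0
      have hp : Prime p := UniqueFactorizationMonoid.irreducible_iff_prime.mp hpirr
      have hpu : p ∣ u := hpz.trans hzu
      have hpv : p ∣ v := hpz.trans hzv
      have hpγ : p ∣ γ := by rw [hγuv]; exact dvd_add hpu hpv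
      have hpβ : p ∣ β := by rw [hβuv]; exact dvd_sub hpu hpv
      have hpa : p ∣ a := hp.dvd_of_dvd_pow (huv ▸ Dvd.dvd.mul_right hpu v)
      have hpα : p ∣ α := by rw [ha]; exact Dvd.dvd.mul_left hpa 2
      exact hpirr.not_isUnit (hprim p hpα hpβ hpγ)
  obtain ⟨κ, εu, hκ⟩ : ∃ d : GaussianInt, Associated (d ^ 2) u :=
    exists_associated_pow_of_mul_eq_pow' hcop huv
  obtain ⟨τ, εv, hτ⟩ : ∃ d : GaussianInt, Associated (d ^ 2) v :=
    exists_associated_pow_of_mul_eq_pow' hcop.symm (by rw [mul_comm]; exact huv)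
  -- degenerate case a = 0
  by_cases ha0 : a = 0
  · have hα0 : α = 0 := by rw [ha, ha0]; ring
    have huv0 : u = 0 ∨ v = 0 := by
      have : u * v = 0 := by rw [huv, ha0]; ring
      exact mul_eq_zero.mp this
    have hβunit : IsUnit β := by
      apply hprim β (hα0 ▸ dvd_zero β) dvd_rfl
      rcases huv0 with h | h
      · rw [hγuv, hβuv, h]
        exact ⟨-1, by ring⟩
      · rw [hγuv, hβuv, h]
        exact ⟨1, by ring⟩
    obtain ⟨e, he⟩ := hβunit
    have hev0 : GaussianEven (0 : GaussianInt) := by rw [evenIff]; simp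
    have hodd1 : ¬ GaussianEven (1 : GaussianInt) := by rw [evenIff]; simp
    refine ⟨0, 1, Or.inl ⟨hev0, hodd1⟩, fun δ _ hδ1 => isUnit_of_dvd_one hδ1, ?_⟩
    rcases huv0 with h | h
    · -- u = 0 : γ = v = -β
      refine ⟨1, e, e, by rw [hα0]; ring, Or.inr ⟨by rw [← he]; ring, ?_⟩⟩
      have hγβ : γ = -β := by rw [hγuv, hβuv, h]; ring
      rw [hγβ, ← he]; ring
    · -- v = 0 : γ = u = β
      refine ⟨1, -e, e, by rw [hα0]; ring, Or.inl ⟨by rw [← he]; push_cast; ring, ?_⟩⟩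
      have hγβ : γ = β := by rw [hγuv, hβuv, h]; ring
      rw [hγβ, ← he]; ring
  -- main case
  · have hu0 : u ≠ 0 := by
      intro h
      apply ha0
      have : a ^ 2 = 0 := by rw [← huv, h]; ring
      exact pow_eq_zero_iff (by norm_num) |>.mp this
    have hv0 : v ≠ 0 := by
      intro h
      apply ha0
      have : a ^ 2 = 0 := by rw [← huv, h]; ring
      exact pow_eq_zero_iff (by norm_num) |>.mp this
    have hκu : κ ^ 2 * εu = u := hκ
    have hτv : τ ^ 2 * εv = v := hτ
    have hκ0 : κ ≠ 0 := by
      intro h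
      apply hu0
      rw [← hκu, h]; ring
    have hτ0 : τ ≠ 0 := by
      intro h
      apply hv0
      rw [← hτv, h]; ring
    have hκτ0 : κ * τ ≠ 0 := mul_ne_zero hκ0 hτ0
    -- κτ ∣ a
    have hdvd : κ * τ ∣ a := by
      rw [← IsIntegrallyClosed.pow_dvd_pow_iff (two_ne_zero)]
      rw [← huv, ← hκu, ← hτv]
      exact ⟨(εu : GaussianInt) * εv, by ring⟩
    obtain ⟨w, hw⟩ := hdvd
    have hwsq : w ^ 2 = (εu : GaussianInt) * εv := by
      apply mul_left_cancel₀ (pow_ne_zero 2 hκτ0)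
      calc (κ*τ)^2 * w^2 = (κ*τ*w)^2 := by ring
        _ = a ^ 2 := by rw [← hw]
        _ = (κ*τ)^2 * ((εu : GaussianInt) * εv) := by rw [← huv, ← hκu, ← hτv]; ring
    have hwunit : IsUnit w := by
      have : IsUnit (w * w) := by
        rw [← pow_two, hwsq]
        exact (εu * εv).isUnit
      exact isUnit_of_mul_isUnit_left this
    obtain ⟨W, rfl⟩ := hwunit
    -- parity of κ and τ
    have hEu : GaussianEven u ↔ GaussianEven κ := by
      rw [← hκu, pow_two, even_mul', even_mul']
      have := unit_not_even εu
      tauto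
    have hEv : GaussianEven v ↔ GaussianEven τ := by
      rw [← hτv, pow_two, even_mul', even_mul']
      have := unit_not_even εv
      tauto
    have hparity : (GaussianEven κ ∧ ¬ GaussianEven τ) ∨ (¬ GaussianEven κ ∧ GaussianEven τ) := by
      rw [← hEu, ← hEv, evenIff, evenIff]
      rw [hγuv, Zsqrtd.re_add, Zsqrtd.im_add] at hγ
      omega
    -- coprimality of κ and τ
    have hcopκτ : ∀ δ : GaussianInt, δ ∣ κ → δ ∣ τ → IsUnit δ := by
      intro δ hδκ hδτ
      apply hcop.isUnit_of_dvd'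
      · rw [← hκu, pow_two]
        exact (hδκ.mul_right κ).mul_right _
      · rw [← hτv, pow_two]
        exact (hδτ.mul_right τ).mul_right _
    refine ⟨κ, τ, hparity, hcopκτ, ?_⟩
    have hαfin : α = 2 * (W : GaussianInt) * κ * τ := by
      rw [ha, hw]; ring
    -- relation between units
    have hinvmul : ((εu⁻¹ : GaussianIntˣ) : GaussianInt) * ↑εu = 1 := by
      rw [← Units.val_mul, inv_mul_cancel, Units.val_one]
    have hm : ((εu : GaussianIntˣ) : GaussianInt) * ↑εu⁻¹ = 1 := by
      rw [← Units.val_mul, mul_inv_cancel, Units.val_one]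
    have hval : ((εu⁻¹ * W : GaussianIntˣ) : GaussianInt)^2
        = ((εu⁻¹ : GaussianIntˣ) : GaussianInt) * ↑εv := by
      rw [Units.val_mul]
      calc (((εu⁻¹ : GaussianIntˣ) : GaussianInt) * ((W : GaussianIntˣ) : GaussianInt))^2
          = ((εu⁻¹ : GaussianIntˣ) : GaussianInt)^2 * ((W : GaussianIntˣ) : GaussianInt)^2 := by
            ring
        _ = ((εu⁻¹ : GaussianIntˣ) : GaussianInt)^2 * (↑εu * ↑εv) := by rw [hwsq]
        _ = (((εu⁻¹ : GaussianIntˣ) : GaussianInt) * ↑εu) *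
              (((εu⁻¹ : GaussianIntˣ) : GaussianInt) * ↑εv) := by ring
        _ = ((εu⁻¹ : GaussianIntˣ) : GaussianInt) * ↑εv := by rw [hinvmul]; ring
    rcases unit_sq (εu⁻¹ * W) with hs | hs
    · -- εv = εu
      have h2 : ((εu⁻¹ : GaussianIntˣ) : GaussianInt) * ↑εv = 1 := by rw [← hval, hs]
      have hvv : (εv : GaussianInt) = εu := by
        calc (εv : GaussianInt)
            = (((εu : GaussianIntˣ) : GaussianInt) * ↑εu⁻¹) * ↑εv := by rw [hm]; ring
          _ = ↑εu * (((εu⁻¹ : GaussianIntˣ) : GaussianInt) * ↑εv) := by ring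
          _ = ↑εu := by rw [h2]; ring
      refine ⟨W, εu, εu, hαfin, Or.inl ⟨?_, ?_⟩⟩
      · rw [hβuv, ← hκu, ← hτv, hvv]; ring
      · rw [hγuv, ← hκu, ← hτv, hvv]; ring
    · -- εv = -εu
      have h2 : ((εu⁻¹ : GaussianIntˣ) : GaussianInt) * ↑εv = -1 := by rw [← hval, hs]
      have hvv : (εv : GaussianInt) = -↑εu := by
        calc (εv : GaussianInt)
            = (((εu : GaussianIntˣ) : GaussianInt) * ↑εu⁻¹) * ↑εv := by rw [hm]; ring
          _ = ↑εu * (((εu⁻¹ : GaussianIntˣ) : GaussianInt) * ↑εv) := by ring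
          _ = -↑εu := by rw [h2]; ring
      refine ⟨W, εu, εu, hαfin, Or.inr ⟨?_, ?_⟩⟩
      · rw [hβuv, ← hκu, ← hτv, hvv]; ring
      · rw [hγuv, ← hκu, ← hτv, hvv]; ring
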